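/- Let q be a prime power, n ≥ 4, and let r, k, s be integers with 3 ≤ r ≤ k ≤ n/2, 1 ≤ s < n, rs ≤ n. Then q^{(s-1)·r(r-1)/2} · ∏_{i=0}^{r-1} (q^{n-is} - 1)/(q^{r-i} - 1) > n · [k choose r]_q · (q^n - 1)/(q - 1), where [k choose r]_q is the Gaussian binomial coefficient. -/

import Mathlib

open Finset
set_option maxHeartbeats 1000000

lemma aux_prod_one_sub {ι : Type*} (s : Finset ι) (f : ι → ℚ) (h0 : ∀ i ∈ s, 0 ≤ f i)
    (h1 : ∀ i ∈ s, f i ≤ 1) : 1 - ∑ i ∈ s, f i ≤ ∏ i ∈ s, (1 - f i) := by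
  classical
  induction s using Finset.induction with
  | empty => simp
  | @insert a s hx ih =>
    rw [Finset.sum_insert hx, Finset.prod_insert hx]
    have h0a := h0 a (mem_insert_self _ _)
    have h1a := h1 a (mem_insert_self _ _)
    have ih' := ih (fun i hi => h0 i (mem_insert_of_mem hi))
      (fun i hi => h1 i (mem_insert_of_mem hi))
    have hs0 : 0 ≤ ∑ i ∈ s, f i := Finset.sum_nonneg (fun i hi => h0 i (mem_insert_of_mem hi))
    nlinarith [mul_le_mul_of_nonneg_left ih' (by linarith : (0:ℚ) ≤ 1 - f a)]

lemma aux_four_mul_le_pow : ∀ r : ℕ, 4 ≤ r → 4 * r ≤ 2 ^ r := by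
  intro r
  induction r with
  | zero => omega
  | succ m ih =>
    intro h
    rcases Nat.lt_or_ge m 4 with h4 | h4
    · have hm : m = 3 := by omega
      subst hm; norm_num
    · have := ih h4
      have h2 : 16 ≤ 2 ^ m := by
        calc (16:ℕ) = 2 ^ 4 := by norm_num
        _ ≤ 2 ^ m := Nat.pow_le_pow_right (by norm_num) h4
      rw [pow_succ]
      omega

lemma aux_pow_half : ∀ n : ℕ, 6 ≤ n → 4 * n ≤ 3 * 2 ^ ((n + 1) / 2) := by
  intro n
  induction n using Nat.strong_induction_on with
  | _ n ih =>
    intro hn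
    rcases Nat.lt_or_ge n 14 with h | h
    · interval_cases n <;> norm_num
    · have h2 := ih (n - 2) (by omega) (by omega)
      have he : (n + 1) / 2 = (n - 2 + 1) / 2 + 1 := by omega
      have h4 : 4 ≤ 2 ^ ((n - 2 + 1) / 2) := by
        calc (4:ℕ) = 2 ^ 2 := by norm_num
        _ ≤ 2 ^ ((n - 2 + 1) / 2) := Nat.pow_le_pow_right (by norm_num) (by omega)
      rw [he, pow_succ]
      omega

lemma key_numeric (q n r k s : ℕ) (hq : 2 ≤ q) (hr : 3 ≤ r) (hrk : r ≤ k)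
    (hkn : 2 * k ≤ n) (hs : 1 ≤ s) (hrs : r * s ≤ n)
    (hbad : ¬(q = 2 ∧ r = 3 ∧ s = 2 ∧ n = 6)) :
    (n : ℚ) ≤ ((q : ℚ) - 1) * (q : ℚ) ^ (r * (n - k) - n) *
      (1 - 2 * ((q : ℚ) ^ (n - (r - 1) * s))⁻¹) := by
  have hQ : (2:ℚ) ≤ (q:ℚ) := by exact_mod_cast hq
  have hQ0 : (0:ℚ) < (q:ℚ) := by linarith
  have hab : (r - 1) * s + s = r * s := by
    cases r with
    | zero => omega
    | succ r' => simp [Nat.succ_sub_one]; ring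
  have h3nk : 3 * (n - k) ≤ r * (n - k) := Nat.mul_le_mul hr (le_refl _)
  have hE2 : (n + 1) / 2 ≤ r * (n - k) - n := by omega
  have hpowpos : (0:ℚ) < (q:ℚ) ^ (r * (n - k) - n) := pow_pos hQ0 _
  have h2pow : ∀ m : ℕ, (2:ℚ) ^ m ≤ (q:ℚ) ^ m := fun m => pow_le_pow_left₀ (by norm_num) hQ m
  have hm0ge : 2 ≤ n - (r - 1) * s := by
    rcases Nat.eq_or_lt_of_le hs with h1 | h1
    · rw [← h1]; simp only [mul_one]; omega
    · omega
  rcases Nat.lt_or_ge (n - (r - 1) * s) 3 with hm3 | hm3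
  · -- m0 = 2 case
    have hm0e : n - (r - 1) * s = 2 := by omega
    have hs2 : s = 2 := by
      rcases Nat.eq_or_lt_of_le hs with h1 | h1
      · exfalso
        rw [← h1] at hm0e
        simp only [mul_one] at hm0e
        omega
      · omega
    subst hs2
    have hn2r : n = 2 * r := by omega
    have hk : r = k := by omega
    subst hk
    have hEe : r * (n - r) - n = r * (r - 2) := by
      have h1 : n - r = r := by omega
      rw [h1]
      have h2 : r * (r - 2) + r * 2 = r * r := by
        rw [← Nat.mul_add]; congr 1; omega
      omega
    have hrr2 : r ≤ r * (r - 2) := by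
      have := Nat.mul_le_mul (le_refl r) (show 1 ≤ r - 2 by omega)
      omega
    rw [hEe, hm0e]
    rcases Nat.eq_or_lt_of_le hq with hq2 | hq3
    · -- q = 2
      subst hq2
      have hr4 : 4 ≤ r := by
        by_contra h
        push_neg at h
        exact hbad ⟨rfl, by omega, rfl, by omega⟩
      have hnat2 : 2 * n ≤ 2 ^ (r * (r - 2)) := by
        have h1 := aux_four_mul_le_pow r hr4
        have h2 : 2 ^ r ≤ 2 ^ (r * (r - 2)) := Nat.pow_le_pow_right (by norm_num) hrr2
        omega
      have hcast : (2 * n : ℚ) ≤ (2:ℚ) ^ (r * (r - 2)) := by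
        have := (Nat.cast_le (α := ℚ)).mpr hnat2
        push_cast at this
        linarith
      push_cast
      norm_num
      linarith
    · -- q ≥ 3
      have hQ3 : (3:ℚ) ≤ (q:ℚ) := by exact_mod_cast hq3
      have hnat : n ≤ 2 ^ (r * (r - 2)) := by
        rcases Nat.eq_or_lt_of_le hr with h3 | h4
        · rw [← h3] at hn2r ⊢
          norm_num; omega
        · have h1 := aux_four_mul_le_pow r (by omega)
          have h2 : 2 ^ r ≤ 2 ^ (r * (r - 2)) := Nat.pow_le_pow_right (by norm_num) hrr2
          omega
      have hnQ : (n:ℚ) ≤ (q:ℚ) ^ (r * (r - 2)) := by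
        have h1 := (Nat.cast_le (α := ℚ)).mpr hnat
        push_cast at h1
        exact h1.trans (h2pow _)
      have h9 : (9:ℚ) ≤ (q:ℚ) ^ 2 := by nlinarith
      have hinv : ((q:ℚ) ^ 2)⁻¹ ≤ 9⁻¹ := by
        apply inv_anti₀ (by norm_num) h9
      have hfac : (7:ℚ)/9 ≤ 1 - 2 * ((q:ℚ) ^ 2)⁻¹ := by linarith
      have hge1 : (1:ℚ) ≤ ((q:ℚ) - 1) * (1 - 2 * ((q:ℚ) ^ 2)⁻¹) := by
        nlinarith [mul_le_mul (show (2:ℚ) ≤ (q:ℚ) - 1 by linarith) hfac (by norm_num) (by linarith)]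
      calc (n:ℚ) ≤ (q:ℚ) ^ (r * (r - 2)) := hnQ
        _ ≤ (((q:ℚ) - 1) * (1 - 2 * ((q:ℚ) ^ 2)⁻¹)) * (q:ℚ) ^ (r * (r - 2)) :=
            le_mul_of_one_le_left (pow_pos hQ0 _).le hge1
        _ = ((q:ℚ) - 1) * (q:ℚ) ^ (r * (r - 2)) * (1 - 2 * ((q:ℚ) ^ 2)⁻¹) := by ring
  · -- m0 ≥ 3 case
    have hn6 : 6 ≤ n := by omega
    have h8 : (8:ℚ) ≤ (q:ℚ) ^ (n - (r - 1) * s) := by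
      calc (8:ℚ) = 2 ^ 3 := by norm_num
        _ ≤ 2 ^ (n - (r - 1) * s) := pow_le_pow_right₀ (by norm_num) hm3
        _ ≤ (q:ℚ) ^ (n - (r - 1) * s) := h2pow _
    have hinv : ((q:ℚ) ^ (n - (r - 1) * s))⁻¹ ≤ 8⁻¹ := inv_anti₀ (by norm_num) h8
    have hfac : (3:ℚ)/4 ≤ 1 - 2 * ((q:ℚ) ^ (n - (r - 1) * s))⁻¹ := by linarith
    have hnn : 4 * n ≤ 3 * 2 ^ (r * (n - k) - n) := by
      have h1 := aux_pow_half n hn6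
      have h2 : 2 ^ ((n + 1) / 2) ≤ 2 ^ (r * (n - k) - n) := Nat.pow_le_pow_right (by norm_num) hE2
      omega
    have hn4 : (n:ℚ) ≤ 3/4 * (q:ℚ) ^ (r * (n - k) - n) := by
      have h1 := (Nat.cast_le (α := ℚ)).mpr hnn
      push_cast at h1
      have h2 := h2pow (r * (n - k) - n)
      linarith
    calc (n:ℚ) ≤ 3/4 * (q:ℚ) ^ (r * (n - k) - n) := hn4
      _ ≤ (1 - 2 * ((q:ℚ) ^ (n - (r - 1) * s))⁻¹) * (q:ℚ) ^ (r * (n - k) - n) :=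
          mul_le_mul_of_nonneg_right hfac hpowpos.le
      _ ≤ ((q:ℚ) - 1) * ((1 - 2 * ((q:ℚ) ^ (n - (r - 1) * s))⁻¹) * (q:ℚ) ^ (r * (n - k) - n)) :=
          le_mul_of_one_le_left (mul_nonneg (by linarith) hpowpos.le) (by linarith)
      _ = ((q:ℚ) - 1) * (q:ℚ) ^ (r * (n - k) - n) * (1 - 2 * ((q:ℚ) ^ (n - (r - 1) * s))⁻¹) := by
          ring





/-- The Gaussian binomial coefficient `[k choose r]_q` as a rational number. -/
def gaussBinom (q : ℚ) (k r : ℕ) : ℚ :=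
  ∏ i ∈ Finset.range r, (q ^ (k - i) - 1) / (q ^ (r - i) - 1)

/-- For `q ≥ 2`, `n ≥ 4`, `3 ≤ r ≤ k ≤ n/2`, `1 ≤ s < n`, `rs ≤ n`:
`q^{(s-1)·r(r-1)/2} ∏_{i=0}^{r-1}(q^{n-is}-1)/(q^{r-i}-1) > n [k choose r]_q (q^n-1)/(q-1)`. -/
theorem stmt6 (q n r k s : ℕ) (hq : 2 ≤ q) (hn : 4 ≤ n) (hr : 3 ≤ r) (hrk : r ≤ k)
    (hkn : 2 * k ≤ n) (hs : 1 ≤ s) (hsn : s < n) (hrs : r * s ≤ n) :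
    (n : ℚ) * gaussBinom (q : ℚ) k r * (((q : ℚ) ^ n - 1) / ((q : ℚ) - 1)) <
      (q : ℚ) ^ ((s - 1) * (r * (r - 1) / 2)) *
        ∏ i ∈ Finset.range r, (((q : ℚ) ^ (n - i * s) - 1) / ((q : ℚ) ^ (r - i) - 1)) := by
  by_cases hbad : q = 2 ∧ r = 3 ∧ s = 2 ∧ n = 6
  · obtain ⟨hq2, hr3, hs2, hn6⟩ := hbad
    subst hq2 hr3 hs2 hn6
    have hk3 : k = 3 := by omega
    subst hk3
    norm_num [gaussBinom, Finset.prod_range_succ]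
  · have hQ : (2:ℚ) ≤ (q:ℚ) := by exact_mod_cast hq
    have hQ0 : (0:ℚ) < (q:ℚ) := by linarith
    have hQ1 : (0:ℚ) < (q:ℚ) - 1 := by linarith
    have hone : (1:ℚ) ≤ (q:ℚ) := by linarith
    have h2pow : ∀ m : ℕ, (2:ℚ) ^ m ≤ (q:ℚ) ^ m := fun m =>
      pow_le_pow_left₀ (by norm_num) hQ m
    have hpow1 : ∀ m : ℕ, (1:ℚ) ≤ (q:ℚ) ^ m := fun m => by
      simpa using pow_le_pow_left₀ zero_le_one hone m
    have hab : (r - 1) * s + s = r * s := by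
      cases r with
      | zero => omega
      | succ r' => simp [Nat.succ_sub_one]; ring
    -- product positivity
    have hDf : ∀ i ∈ Finset.range r, (0:ℚ) < (q:ℚ) ^ (r - i) - 1 := by
      intro i hi
      rw [Finset.mem_range] at hi
      have h1 : (q:ℚ) ≤ (q:ℚ) ^ (r - i) := le_self_pow₀ hone (by omega)
      linarith
    have hD : (0:ℚ) < ∏ i ∈ Finset.range r, ((q:ℚ) ^ (r - i) - 1) := Finset.prod_pos hDf
    have hAf : ∀ i ∈ Finset.range r, (0:ℚ) < (q:ℚ) ^ (k - i) - 1 := by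
      intro i hi
      rw [Finset.mem_range] at hi
      have h1 : (q:ℚ) ≤ (q:ℚ) ^ (k - i) := le_self_pow₀ hone (by omega)
      linarith
    have hApos : (0:ℚ) < ∏ i ∈ Finset.range r, ((q:ℚ) ^ (k - i) - 1) := Finset.prod_pos hAf
    -- bound A
    have hAe : ∏ i ∈ Finset.range r, ((q:ℚ) ^ (k - i) - 1)
        ≤ (q:ℚ) ^ (∑ i ∈ Finset.range r, (k - i)) := by
      rw [← Finset.prod_pow_eq_pow_sum]
      exact Finset.prod_le_prod (fun i hi => (hAf i hi).le) (fun i hi => by linarith)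
    -- B as power times product
    have hBeq : ∏ i ∈ Finset.range r, ((q:ℚ) ^ (n - i * s) - 1)
        = (q:ℚ) ^ (∑ i ∈ Finset.range r, (n - i * s)) *
          ∏ i ∈ Finset.range r, (1 - ((q:ℚ) ^ (n - i * s))⁻¹) := by
      rw [← Finset.prod_pow_eq_pow_sum, ← Finset.prod_mul_distrib]
      refine Finset.prod_congr rfl (fun i hi => ?_)
      have hne : ((q:ℚ) ^ (n - i * s)) ≠ 0 := by positivity
      field_simp
    -- sum of inverses bound
    have hterm : ∀ i ∈ Finset.range r, ((q:ℚ) ^ (n - i * s))⁻¹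
        ≤ ((q:ℚ) ^ (n - (r - 1) * s))⁻¹ * ((2:ℚ) ^ (r - 1 - i))⁻¹ := by
      intro i hi
      rw [Finset.mem_range] at hi
      have hexp : (n - (r - 1) * s) + (r - 1 - i) ≤ n - i * s := by
        have e1 : i * s + (r - 1 - i) * s = (r - 1) * s := by
          rw [← Nat.add_mul]; congr 1; omega
        have e2 : (r - 1 - i) ≤ (r - 1 - i) * s := Nat.le_mul_of_pos_right _ (by omega)
        omega
      have hge : (q:ℚ) ^ (n - (r - 1) * s) * (2:ℚ) ^ (r - 1 - i) ≤ (q:ℚ) ^ (n - i * s) := by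
        calc (q:ℚ) ^ (n - (r - 1) * s) * (2:ℚ) ^ (r - 1 - i)
            ≤ (q:ℚ) ^ (n - (r - 1) * s) * (q:ℚ) ^ (r - 1 - i) := by
              have := h2pow (r - 1 - i)
              have hp := pow_pos hQ0 (n - (r - 1) * s)
              nlinarith
          _ = (q:ℚ) ^ ((n - (r - 1) * s) + (r - 1 - i)) := (pow_add _ _ _).symm
          _ ≤ (q:ℚ) ^ (n - i * s) := pow_le_pow_right₀ hone hexp
      rw [← mul_inv]
      exact inv_anti₀ (by positivity) hge
    have hgeom : ∑ i ∈ Finset.range r, ((2:ℚ) ^ (r - 1 - i))⁻¹ ≤ 2 := by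
      have h1 : ∑ i ∈ Finset.range r, ((2:ℚ) ^ (r - 1 - i))⁻¹
          = ∑ j ∈ Finset.range r, ((2:ℚ) ^ j)⁻¹ :=
        Finset.sum_range_reflect (fun j => ((2:ℚ) ^ j)⁻¹) r
      rw [h1]
      have h2 : ∑ j ∈ Finset.range r, ((2:ℚ) ^ j)⁻¹ = ∑ j ∈ Finset.range r, ((2:ℚ)⁻¹) ^ j := by
        refine Finset.sum_congr rfl (fun j _ => ?_)
        rw [inv_pow]
      rw [h2, geom_sum_eq (by norm_num : (2:ℚ)⁻¹ ≠ 1)]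
      have hp : (0:ℚ) ≤ ((2:ℚ)⁻¹) ^ r := by positivity
      rw [div_le_iff_of_neg (by norm_num : (2:ℚ)⁻¹ - 1 < 0)]
      linarith
    have hsum : ∑ i ∈ Finset.range r, ((q:ℚ) ^ (n - i * s))⁻¹
        ≤ 2 * ((q:ℚ) ^ (n - (r - 1) * s))⁻¹ := by
      calc ∑ i ∈ Finset.range r, ((q:ℚ) ^ (n - i * s))⁻¹
          ≤ ∑ i ∈ Finset.range r, ((q:ℚ) ^ (n - (r - 1) * s))⁻¹ * ((2:ℚ) ^ (r - 1 - i))⁻¹ :=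
            Finset.sum_le_sum hterm
        _ = ((q:ℚ) ^ (n - (r - 1) * s))⁻¹ * ∑ i ∈ Finset.range r, ((2:ℚ) ^ (r - 1 - i))⁻¹ := by
            rw [Finset.mul_sum]
        _ ≤ ((q:ℚ) ^ (n - (r - 1) * s))⁻¹ * 2 := by
            have : (0:ℚ) ≤ ((q:ℚ) ^ (n - (r - 1) * s))⁻¹ := by positivity
            nlinarith
        _ = 2 * ((q:ℚ) ^ (n - (r - 1) * s))⁻¹ := by ring
    have hP : 1 - 2 * ((q:ℚ) ^ (n - (r - 1) * s))⁻¹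
        ≤ ∏ i ∈ Finset.range r, (1 - ((q:ℚ) ^ (n - i * s))⁻¹) := by
      refine le_trans (by linarith) (aux_prod_one_sub _ _ ?_ ?_)
      · intro i _; positivity
      · intro i _; exact inv_le_one_of_one_le₀ (hpow1 _)
    -- exponent identity
    have hSA : ∑ i ∈ Finset.range r, (k - i) = r * k - ∑ i ∈ Finset.range r, i := by
      have h := Finset.sum_tsub_distrib (f := fun _ => k) (g := fun i => i) (Finset.range r)
        (fun i hi => by rw [Finset.mem_range] at hi; show i ≤ k; omega)
      simp only [Finset.sum_const, Finset.card_range, smul_eq_mul] at h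
      exact h
    have histep : ∀ i ∈ Finset.range r, i * s ≤ n := by
      intro i hi
      rw [Finset.mem_range] at hi
      have h1 : i * s ≤ (r - 1) * s := Nat.mul_le_mul (by omega) (le_refl s)
      omega
    have hSB : ∑ i ∈ Finset.range r, (n - i * s)
        = r * n - (∑ i ∈ Finset.range r, i) * s := by
      have h := Finset.sum_tsub_distrib (f := fun _ => n) (g := fun i => i * s)
        (Finset.range r) histep
      simp only [Finset.sum_const, Finset.card_range, smul_eq_mul] at h
      rw [← Finset.sum_mul] at h
      exact h
    have hS2 : (∑ i ∈ Finset.range r, i) * 2 = r * (r - 1) := Finset.sum_range_id_mul_two r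
    have hP13 : r * (n - k) + r * k = r * n := by
      rw [← Nat.mul_add]; congr 1; omega
    have hP43 : (∑ i ∈ Finset.range r, i) * s ≤ r * n := by
      calc (∑ i ∈ Finset.range r, i) * s = ∑ i ∈ Finset.range r, i * s := Finset.sum_mul _ _ _
        _ ≤ ∑ i ∈ Finset.range r, n := Finset.sum_le_sum histep
        _ = r * n := by rw [Finset.sum_const, Finset.card_range, smul_eq_mul]
    have h3nk : 3 * (n - k) ≤ r * (n - k) := Nat.mul_le_mul hr (le_refl _)
    have hrk_mul : r * (r - 1) ≤ r * k := Nat.mul_le_mul (le_refl r) (by omega)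
    have hsplit : (s - 1) * (∑ i ∈ Finset.range r, i) + (∑ i ∈ Finset.range r, i)
        = s * (∑ i ∈ Finset.range r, i) := by
      cases s with
      | zero => omega
      | succ s' => simp [Nat.succ_sub_one]; ring
    have hcomm : (∑ i ∈ Finset.range r, i) * s = s * (∑ i ∈ Finset.range r, i) :=
      Nat.mul_comm _ _
    have hts : r * (r - 1) / 2 = ∑ i ∈ Finset.range r, i := by omega
    have hexp_id : (r * (n - k) - n) + (∑ i ∈ Finset.range r, (k - i)) + n
        = (s - 1) * (r * (r - 1) / 2) + ∑ i ∈ Finset.range r, (n - i * s) := by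
      rw [hSA, hSB, hts]
      omega
    have hexp_q : (q:ℚ) ^ (r * (n - k) - n) * (q:ℚ) ^ (∑ i ∈ Finset.range r, (k - i)) * (q:ℚ) ^ n
        = (q:ℚ) ^ ((s - 1) * (r * (r - 1) / 2)) * (q:ℚ) ^ (∑ i ∈ Finset.range r, (n - i * s)) := by
      rw [← pow_add, ← pow_add, ← pow_add]
      exact congrArg _ hexp_id
    -- the key numerator inequality
    have hnum := key_numeric q n r k s hq hr hrk hkn hs hrs hbad
    have hn0 : (0:ℚ) < (n:ℚ) := by
      have : (0:ℕ) < n := by omega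
      exact_mod_cast this
    have hCpos : (0:ℚ) < ((q:ℚ) ^ n - 1) / ((q:ℚ) - 1) := by
      apply div_pos _ hQ1
      have := hpow1 n
      have h2 : (2:ℚ) ≤ (q:ℚ) ^ n := le_trans hQ (le_self_pow₀ hone (by omega))
      linarith
    have hC : ((q:ℚ) ^ n - 1) / ((q:ℚ) - 1) < (q:ℚ) ^ n / ((q:ℚ) - 1) :=
      div_lt_div_of_pos_right (by linarith) hQ1
    have hne1 : ((q:ℚ) - 1) ≠ 0 := ne_of_gt hQ1
    have KEY : (n:ℚ) * (∏ i ∈ Finset.range r, ((q:ℚ) ^ (k - i) - 1)) *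
        (((q:ℚ) ^ n - 1) / ((q:ℚ) - 1)) <
        (q:ℚ) ^ ((s - 1) * (r * (r - 1) / 2)) *
        ∏ i ∈ Finset.range r, ((q:ℚ) ^ (n - i * s) - 1) := by
      have step1 : (n:ℚ) * (∏ i ∈ Finset.range r, ((q:ℚ) ^ (k - i) - 1)) *
          (((q:ℚ) ^ n - 1) / ((q:ℚ) - 1))
          ≤ (n:ℚ) * (q:ℚ) ^ (∑ i ∈ Finset.range r, (k - i)) *
            (((q:ℚ) ^ n - 1) / ((q:ℚ) - 1)) :=
        mul_le_mul_of_nonneg_right (mul_le_mul_of_nonneg_left hAe hn0.le) hCpos.le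
      have step2 : (n:ℚ) * (q:ℚ) ^ (∑ i ∈ Finset.range r, (k - i)) *
          (((q:ℚ) ^ n - 1) / ((q:ℚ) - 1))
          < (n:ℚ) * (q:ℚ) ^ (∑ i ∈ Finset.range r, (k - i)) * ((q:ℚ) ^ n / ((q:ℚ) - 1)) := by
        apply mul_lt_mul_of_pos_left hC
        positivity
      have step3 : (n:ℚ) * (q:ℚ) ^ (∑ i ∈ Finset.range r, (k - i)) * ((q:ℚ) ^ n / ((q:ℚ) - 1))
          ≤ (q:ℚ) ^ ((s - 1) * (r * (r - 1) / 2)) *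
            (q:ℚ) ^ (∑ i ∈ Finset.range r, (n - i * s)) *
            (1 - 2 * ((q:ℚ) ^ (n - (r - 1) * s))⁻¹) := by
        have hpos2 : (0:ℚ) ≤ (q:ℚ) ^ (∑ i ∈ Finset.range r, (k - i)) * (q:ℚ) ^ n / ((q:ℚ) - 1) := by
          apply div_nonneg (by positivity) hQ1.le
        calc (n:ℚ) * (q:ℚ) ^ (∑ i ∈ Finset.range r, (k - i)) * ((q:ℚ) ^ n / ((q:ℚ) - 1))
            = (n:ℚ) * ((q:ℚ) ^ (∑ i ∈ Finset.range r, (k - i)) * (q:ℚ) ^ n / ((q:ℚ) - 1)) := by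
              ring
          _ ≤ (((q:ℚ) - 1) * (q:ℚ) ^ (r * (n - k) - n) *
                (1 - 2 * ((q:ℚ) ^ (n - (r - 1) * s))⁻¹)) *
              ((q:ℚ) ^ (∑ i ∈ Finset.range r, (k - i)) * (q:ℚ) ^ n / ((q:ℚ) - 1)) :=
              mul_le_mul_of_nonneg_right hnum hpos2
          _ = ((q:ℚ) ^ (r * (n - k) - n) * (q:ℚ) ^ (∑ i ∈ Finset.range r, (k - i)) * (q:ℚ) ^ n) *
              (1 - 2 * ((q:ℚ) ^ (n - (r - 1) * s))⁻¹) := by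
              field_simp
          _ = (q:ℚ) ^ ((s - 1) * (r * (r - 1) / 2)) *
              (q:ℚ) ^ (∑ i ∈ Finset.range r, (n - i * s)) *
              (1 - 2 * ((q:ℚ) ^ (n - (r - 1) * s))⁻¹) := by
              rw [hexp_q]
      have step4 : (q:ℚ) ^ ((s - 1) * (r * (r - 1) / 2)) *
          (q:ℚ) ^ (∑ i ∈ Finset.range r, (n - i * s)) *
          (1 - 2 * ((q:ℚ) ^ (n - (r - 1) * s))⁻¹)
          ≤ (q:ℚ) ^ ((s - 1) * (r * (r - 1) / 2)) *
            ∏ i ∈ Finset.range r, ((q:ℚ) ^ (n - i * s) - 1) := by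
        rw [hBeq, ← mul_assoc]
        rw [mul_assoc ((q:ℚ) ^ ((s - 1) * (r * (r - 1) / 2))) _ _]
        rw [← mul_assoc]
        exact mul_le_mul_of_nonneg_left hP (by positivity)
      exact lt_of_le_of_lt step1 (lt_of_lt_of_le step2 (le_trans step3 step4))
    -- reduce goal to KEY
    rw [gaussBinom, Finset.prod_div_distrib, Finset.prod_div_distrib]
    rw [show (n:ℚ) * ((∏ i ∈ Finset.range r, ((q:ℚ) ^ (k - i) - 1)) /
          (∏ i ∈ Finset.range r, ((q:ℚ) ^ (r - i) - 1))) * (((q:ℚ) ^ n - 1) / ((q:ℚ) - 1))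
        = ((n:ℚ) * (∏ i ∈ Finset.range r, ((q:ℚ) ^ (k - i) - 1)) *
            (((q:ℚ) ^ n - 1) / ((q:ℚ) - 1))) /
          (∏ i ∈ Finset.range r, ((q:ℚ) ^ (r - i) - 1)) from by ring]
    rw [show (q:ℚ) ^ ((s - 1) * (r * (r - 1) / 2)) *
          ((∏ i ∈ Finset.range r, ((q:ℚ) ^ (n - i * s) - 1)) /
            (∏ i ∈ Finset.range r, ((q:ℚ) ^ (r - i) - 1)))
        = ((q:ℚ) ^ ((s - 1) * (r * (r - 1) / 2)) *
            (∏ i ∈ Finset.range r, ((q:ℚ) ^ (n - i * s) - 1))) /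
          (∏ i ∈ Finset.range r, ((q:ℚ) ^ (r - i) - 1)) from by ring]
    rw [div_lt_div_iff₀ hD hD]
    exact mul_lt_mul_of_pos_right KEY hD
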